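/- Let H be a countable set (the hypothesis space) and X a countable set (the sample space). Let p and q be probability mass functions on H that are (ε, δ)-indistinguishable with ε > 0 and δ ≥ 0 (the distributions of the unlearned and re-trained models), and let κ assign to each h ∈ H a probability mass function κ(h) on X (the distribution of the adversarial example crafted against model h). Define B = {h ∈ H : p(h) > e^{2ε}·q(h) or p(h) < e^{−2ε}·q(h)}. Then p(B) ≤ 2δ/(1 − e^{−ε}) and q(B) ≤ 2δ/(1 − e^{−ε}); moreover, for every h ∈ B and every subset X' ⊆ X, either p(h)·κ(h)(X') ≥ e^{2ε}·q(h)·κ(h)(X') or p(h)·κ(h)(X') ≤ e^{−2ε}·q(h)·κ(h)(X'). -/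
import Mathlib


open Real

/-- Proposition 1: let `p`, `q` be (ε, δ)-indistinguishable pmfs on a countable
hypothesis space `H`, and let `κ h` be the pmf on the sample space `X` of the
adversarial example crafted against model `h`. Then the set
`B = {h | p h > e^{2ε} q h ∨ p h < e^{-2ε} q h}` has `p`- and `q`-mass at most
`2δ / (1 - e^{-ε})`, and for every `h ∈ B` and every `X' ⊆ X`, the joint
probabilities `p h * κ h (X')` and `q h * κ h (X')` are separated by a factor
of `e^{2ε}` (in one direction or the other). -/
theorem adversarial_example_less_indistinguishable
    {H X : Type*} [Countable H] [Countable X] (p q : H → ℝ)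
    (hp0 : ∀ h, 0 ≤ p h) (hq0 : ∀ h, 0 ≤ q h)
    (hp1 : HasSum p 1) (hq1 : HasSum q 1)
    (ε δ : ℝ) (hε : 0 < ε) (hδ : 0 ≤ δ)
    (hind₁ : ∀ T : Set H, (∑' h : T, p h) ≤ exp ε * (∑' h : T, q h) + δ)
    (hind₂ : ∀ T : Set H, (∑' h : T, q h) ≤ exp ε * (∑' h : T, p h) + δ)
    (κ : H → X → ℝ)
    (hκ0 : ∀ h x, 0 ≤ κ h x) (hκ1 : ∀ h, HasSum (κ h) 1) :
    (∑' h : {h : H | p h > exp (2 * ε) * q h ∨ p h < exp (-(2 * ε)) * q h}, p h)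
        ≤ 2 * δ / (1 - exp (-ε)) ∧
    (∑' h : {h : H | p h > exp (2 * ε) * q h ∨ p h < exp (-(2 * ε)) * q h}, q h)
        ≤ 2 * δ / (1 - exp (-ε)) ∧
    ∀ h ∈ {h : H | p h > exp (2 * ε) * q h ∨ p h < exp (-(2 * ε)) * q h},
      ∀ X' : Set X,
        exp (2 * ε) * (q h * (∑' x : X', κ h x)) ≤ p h * (∑' x : X', κ h x) ∨
        p h * (∑' x : X', κ h x) ≤ exp (-(2 * ε)) * (q h * (∑' x : X', κ h x)) := by
  classical
  set B₁ : Set H := {h | p h > exp (2 * ε) * q h} with hB₁def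
  set B₂ : Set H := {h | p h < exp (-(2 * ε)) * q h} with hB₂def
  have hsp : Summable p := hp1.summable
  have hsq : Summable q := hq1.summable
  have hexp1 : exp (-(2 * ε)) * exp (2 * ε) = 1 := by
    rw [← Real.exp_add]; simp
  have hexp2 : exp ε * exp (-(2 * ε)) = exp (-ε) := by
    rw [← Real.exp_add]; ring_nf
  have hepos : 0 < 1 - exp (-ε) := by
    have : exp (-ε) < 1 := Real.exp_lt_one_iff.2 (by linarith)
    linarith
  have hle1 : exp (-(2 * ε)) ≤ 1 := by
    have : exp (-(2 * ε)) ≤ exp 0 := Real.exp_le_exp.2 (by linarith)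
    simpa using this
  -- q(B₁) ≤ e^{-2ε} p(B₁)
  have hqB₁ : (∑' h : B₁, q h) ≤ exp (-(2 * ε)) * (∑' h : B₁, p h) := by
    rw [← tsum_mul_left]
    refine Summable.tsum_le_tsum (fun h => ?_) (hsq.subtype _) ((hsp.subtype _).mul_left _)
    have h2 : p h.1 > exp (2 * ε) * q h.1 := h.2
    rw [Real.exp_neg, ← div_eq_inv_mul, le_div_iff₀ (Real.exp_pos _)]
    nlinarith
  -- p(B₂) ≤ e^{-2ε} q(B₂)
  have hpB₂ : (∑' h : B₂, p h) ≤ exp (-(2 * ε)) * (∑' h : B₂, q h) := by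
    rw [← tsum_mul_left]
    exact Summable.tsum_le_tsum (fun h => le_of_lt h.2) (hsp.subtype _) ((hsq.subtype _).mul_left _)
  have hpB₁nn : 0 ≤ (∑' h : B₁, p h) := tsum_nonneg fun h => hp0 h.1
  have hqB₂nn : 0 ≤ (∑' h : B₂, q h) := tsum_nonneg fun h => hq0 h.1
  have hpB₁ : (∑' h : B₁, p h) ≤ δ / (1 - exp (-ε)) := by
    have h1 := hind₁ B₁
    rw [le_div_iff₀ hepos]
    nlinarith [Real.exp_pos ε]
  have hqB₂ : (∑' h : B₂, q h) ≤ δ / (1 - exp (-ε)) := by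
    have h1 := hind₂ B₂
    rw [le_div_iff₀ hepos]
    nlinarith [Real.exp_pos ε]
  have hqB₁' : (∑' h : B₁, q h) ≤ δ / (1 - exp (-ε)) :=
    hqB₁.trans <| (by nlinarith : exp (-(2 * ε)) * (∑' h : B₁, p h) ≤ (∑' h : B₁, p h)).trans hpB₁
  have hpB₂' : (∑' h : B₂, p h) ≤ δ / (1 - exp (-ε)) :=
    hpB₂.trans <| (by nlinarith : exp (-(2 * ε)) * (∑' h : B₂, q h) ≤ (∑' h : B₂, q h)).trans hqB₂
  have hBeq : {h : H | p h > exp (2 * ε) * q h ∨ p h < exp (-(2 * ε)) * q h} = B₁ ∪ B₂ := rfl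
  have hunion : ∀ (f : H → ℝ), (∀ h, 0 ≤ f h) → Summable f →
      (∑' h : (B₁ ∪ B₂ : Set H), f h) ≤ (∑' h : B₁, f h) + (∑' h : B₂, f h) := by
    intro f hf hsf
    rw [tsum_subtype, tsum_subtype, tsum_subtype, ← Summable.tsum_add (hsf.indicator _) (hsf.indicator _)]
    refine Summable.tsum_le_tsum (fun h => ?_) (hsf.indicator _) ((hsf.indicator _).add (hsf.indicator _))
    by_cases h1 : h ∈ B₁ <;> by_cases h2 : h ∈ B₂ <;>
      simp [Set.indicator_apply, Set.mem_union, h1, h2, hf h]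
  have hdiv : 0 ≤ δ / (1 - exp (-ε)) := div_nonneg hδ hepos.le
  refine ⟨?_, ?_, ?_⟩
  · rw [hBeq]
    calc (∑' h : (B₁ ∪ B₂ : Set H), p h) ≤ (∑' h : B₁, p h) + (∑' h : B₂, p h) :=
          hunion p hp0 hsp
      _ ≤ δ / (1 - exp (-ε)) + δ / (1 - exp (-ε)) := add_le_add hpB₁ hpB₂'
      _ = 2 * δ / (1 - exp (-ε)) := by ring
  · rw [hBeq]
    calc (∑' h : (B₁ ∪ B₂ : Set H), q h) ≤ (∑' h : B₁, q h) + (∑' h : B₂, q h) :=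
          hunion q hq0 hsq
      _ ≤ δ / (1 - exp (-ε)) + δ / (1 - exp (-ε)) := add_le_add hqB₁' hqB₂
      _ = 2 * δ / (1 - exp (-ε)) := by ring
  · intro h hh X'
    have hs : 0 ≤ (∑' x : X', κ h x) := tsum_nonneg fun x => hκ0 h x.1
    rcases hh with hh | hh
    · left
      rw [← mul_assoc]
      exact mul_le_mul_of_nonneg_right hh.le hs
    · right
      rw [← mul_assoc]
      exact mul_le_mul_of_nonneg_right hh.le hs
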